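/- Under Assumptions 1–3, let p ∈ [1, min(q,r)] and γ ∈ (0,1]. There exists a constant K, independent of the admissible step size Δ and of f, such that |μ(f) − μ^Δ(f)| ≤ K·‖f‖_{p,γ}·|Δ^α|^γ for every f ∈ C_{p,γ} and every admissible Δ, where |Δ^α| := h^{α₁}+τ^{α₂} (convergence of the numerical invariant measure in the weak sense). -/

import Mathlib

open MeasureTheory Filter Set Topology ENNReal
noncomputable section

namespace PaperProb

variable {E Ω : Type*}

/-! ### Test function spaces `C_{p,γ}` -/

section QuasiMetric
variable [NormedAddCommGroup E]

/-- the quasi-metric `d_{p,γ}` -/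
def dQ (p γ : ℝ) (u₁ u₂ : E) : ℝ :=
  min 1 (‖u₁ - u₂‖ ^ γ) * (1 + ‖u₁‖ ^ p + ‖u₂‖ ^ p) ^ ((1 : ℝ) / 2)

def wQuot (p : ℝ) (f : E → ℝ) (u : E) : ℝ :=
  |f u| / (1 + ‖u‖ ^ (p / 2))

def hQuot (p γ : ℝ) (f : E → ℝ) (pr : E × E) : ℝ :=
  |f pr.1 - f pr.2| / dQ p γ pr.1 pr.2

/-- membership in `C_{p,γ}(S;ℝ)` -/
def MemC (S : Set E) (p γ : ℝ) (f : E → ℝ) : Prop :=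
  ContinuousOn f S ∧ BddAbove (wQuot p f '' S) ∧ BddAbove (hQuot p γ f '' (S ×ˢ S))

/-- the norm `‖f‖_{p,γ}` of `C_{p,γ}(S;ℝ)` -/
def CNorm (S : Set E) (p γ : ℝ) (f : E → ℝ) : ℝ :=
  sSup (wQuot p f '' S) + sSup (hQuot p γ f '' (S ×ˢ S))

end QuasiMetric

/-! ### bounded Wasserstein distance `W₂` -/

section Wasserstein
variable [NormedAddCommGroup E] [MeasurableSpace E]

def IsCoupling (ν₁ ν₂ : Measure E) (π : Measure (E × E)) : Prop :=
  IsProbabilityMeasure π ∧ π.map Prod.fst = ν₁ ∧ π.map Prod.snd = ν₂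

def W2 (ν₁ ν₂ : Measure E) : ℝ :=
  (⨅ π : {π : Measure (E × E) // IsCoupling ν₁ ν₂ π},
      ∫ pr : E × E, min 1 (‖pr.1 - pr.2‖ ^ 2) ∂π.1) ^ ((1 : ℝ) / 2)

end Wasserstein

/-- boundedness of a test functional -/
def Bdd {α : Type*} (f : α → ℝ) : Prop := ∃ C, ∀ u, |f u| ≤ C

/-! ### Markov semigroups and invariant measures -/

section Markov
variable [MeasurableSpace Ω]

/-- the semigroup `P_t f (x) = 𝔼[f(X^x_t)]` -/
def Pt (ℙ : Measure Ω) (X : E → ℝ → Ω → E) (t : ℝ) (f : E → ℝ) (x : E) : ℝ :=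
  ∫ ω, f (X x t ω) ∂ℙ

/-- the numerical semigroup `P^Δ_{t_k} f (x) = 𝔼[f(Y^{x,Δ}_{t_k})]` -/
def PD (ℙ : Measure Ω) (Y : ℝ × ℝ → E → ℕ → Ω → E) (Δ : ℝ × ℝ) (k : ℕ)
    (f : E → ℝ) (x : E) : ℝ :=
  ∫ ω, f (Y Δ x k ω) ∂ℙ

/-- invariant probability measure of the continuous-time Markov family -/
def IsInvMeasure [MeasurableSpace E] (ℙ : Measure Ω) (X : E → ℝ → Ω → E)
    (μ : Measure E) : Prop :=
  IsProbabilityMeasure μ ∧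
    ∀ t : ℝ, 0 ≤ t → ∀ f : E → ℝ, Measurable f → Bdd f →
      ∫ x, Pt ℙ X t f x ∂μ = ∫ x, f x ∂μ

/-- invariant probability measure (supported on `S = E^h`) of the numerical chain -/
def IsInvMeasureD [MeasurableSpace E] (ℙ : Measure Ω) (Y : ℝ × ℝ → E → ℕ → Ω → E)
    (S : Set E) (Δ : ℝ × ℝ) (ν : Measure E) : Prop :=
  IsProbabilityMeasure ν ∧ ν Sᶜ = 0 ∧
    ∀ k : ℕ, ∀ f : E → ℝ, Measurable f → Bdd f →
      ∫ x, PD ℙ Y Δ k f x ∂ν = ∫ x, f x ∂ν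

end Markov

/-- admissible step sizes `Δ = (h,τ)` -/
def Adm (ht τt : ℝ) (Δ : ℝ × ℝ) : Prop :=
  Δ.1 ∈ Set.Icc (0 : ℝ) ht ∧ Δ.2 ∈ Set.Ioc (0 : ℝ) τt

/-! ### Assumptions of the paper -/

/-- Assumption 1: time-homogeneous Markov family with moment bound and contraction. -/
structure Assumption1 [NormedAddCommGroup E] [NormedSpace ℝ E] [MeasurableSpace E]
    [BorelSpace E] {mΩ : MeasurableSpace Ω} (ℙ : Measure Ω) (ℱ : Filtration ℝ mΩ)
    (X : E → ℝ → Ω → E) (r rt γ₁ β L₁ L₂ : ℝ) (ρ : ℝ → ℝ) : Prop where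
  prob : IsProbabilityMeasure ℙ
  init : ∀ x ω, X x 0 ω = x
  jmeas : ∀ t : ℝ, Measurable fun p : E × Ω => X p.1 t p.2
  pathMeas : ∀ x ω, Measurable fun t : ℝ => X x t ω
  adapted : ∀ x, ∀ t : ℝ, 0 ≤ t → Measurable[ℱ t] (X x t)
  markov : ∀ f : E → ℝ, Measurable f → Bdd f → ∀ x, ∀ s t : ℝ, 0 ≤ s → 0 ≤ t →
    (ℙ[(fun ω => f (X x (s + t) ω))|ℱ s]) =ᵐ[ℙ] fun ω => ∫ ω', f (X (X x s ω) t ω') ∂ℙ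
  hr : 2 ≤ r
  hrt : 1 ≤ rt
  hL₁ : 0 < L₁
  moment : ∀ x, ∀ t : ℝ, 0 ≤ t →
    ∫⁻ ω, (‖X x t ω‖₊ : ℝ≥0∞) ^ r ∂ℙ ≤ ENNReal.ofReal (L₁ * (1 + ‖x‖ ^ (rt * r)))
  hγ₁ : γ₁ ∈ Set.Ioc (0 : ℝ) 1
  hβ : β ∈ Set.Icc (0 : ℝ) (r - 1)
  hL₂ : 0 < L₂
  ρ_cont : Continuous ρ
  ρ_nonneg : ∀ t, 0 ≤ ρ t
  ρ_int : IntegrableOn (fun t => ρ t ^ γ₁) (Set.Ici (0 : ℝ))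
  contract : ∀ x y, ∀ t : ℝ, 0 ≤ t →
    (∫⁻ ω, (‖X x t ω - X y t ω‖₊ : ℝ≥0∞) ^ (2 : ℝ) ∂ℙ) ^ ((1 : ℝ) / 2) ≤
      ENNReal.ofReal (L₂ * ‖x - y‖ * (1 + ‖x‖ ^ β + ‖y‖ ^ β) * ρ t)

/-- Assumption 2: numerical discretization as a time-homogeneous Markov chain with
uniform moment bound and strong-mixing-type contraction. -/
structure Assumption2 [NormedAddCommGroup E] [NormedSpace ℝ E] [MeasurableSpace E]
    [BorelSpace E] {mΩ : MeasurableSpace Ω} (ℙ : Measure Ω) (ℱ : Filtration ℝ mΩ)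
    (Eh : ℝ → Set E) (Y : ℝ × ℝ → E → ℕ → Ω → E)
    (ht τt q qt γ₂ κ L₃ L₄ : ℝ) (ρD : ℝ × ℝ → ℝ → ℝ) : Prop where
  prob : IsProbabilityMeasure ℙ
  hht : ht ∈ Set.Icc (0 : ℝ) 1
  hτt : τt ∈ Set.Ioc (0 : ℝ) 1
  hE0 : Eh 0 = Set.univ
  init : ∀ Δ, Adm ht τt Δ → ∀ x ∈ Eh Δ.1, ∀ ω, Y Δ x 0 ω = x
  stateMem : ∀ Δ, Adm ht τt Δ → ∀ x ∈ Eh Δ.1, ∀ (k : ℕ) ω, Y Δ x k ω ∈ Eh Δ.1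
  jmeas : ∀ Δ, ∀ k : ℕ, Measurable fun p : E × Ω => Y Δ p.1 k p.2
  adapted : ∀ Δ, Adm ht τt Δ → ∀ x ∈ Eh Δ.1, ∀ k : ℕ,
    Measurable[ℱ ((k : ℝ) * Δ.2)] (Y Δ x k)
  markov : ∀ Δ, Adm ht τt Δ → ∀ x ∈ Eh Δ.1, ∀ f : E → ℝ, Measurable f → Bdd f →
    ∀ j k : ℕ,
      (ℙ[(fun ω => f (Y Δ x (j + k) ω))|ℱ ((j : ℝ) * Δ.2)]) =ᵐ[ℙ]
        fun ω => ∫ ω', f (Y Δ (Y Δ x j ω) k ω') ∂ℙ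
  hq : 2 ≤ q
  hqt : 1 ≤ qt
  hL₃ : 0 < L₃
  moment : ∀ Δ, Adm ht τt Δ → ∀ x ∈ Eh Δ.1, ∀ k : ℕ,
    ∫⁻ ω, (‖Y Δ x k ω‖₊ : ℝ≥0∞) ^ q ∂ℙ ≤ ENNReal.ofReal (L₃ * (1 + ‖x‖ ^ (qt * q)))
  hγ₂ : γ₂ ∈ Set.Ioc (0 : ℝ) 1
  hκ : κ ∈ Set.Icc (0 : ℝ) (q - 1)
  hL₄ : 0 < L₄
  ρD_nonneg : ∀ Δ t, 0 ≤ ρD Δ t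
  ρD_sum : ∃ B : ℝ, ∀ Δ, Adm ht τt Δ →
    Summable (fun k : ℕ => ρD Δ ((k : ℝ) * Δ.2) ^ γ₂) ∧
      Δ.2 * ∑' k : ℕ, ρD Δ ((k : ℝ) * Δ.2) ^ γ₂ ≤ B
  contract : ∀ Δ, Adm ht τt Δ → ∀ x ∈ Eh Δ.1, ∀ y ∈ Eh Δ.1, ∀ k : ℕ,
    (∫⁻ ω, (‖Y Δ x k ω - Y Δ y k ω‖₊ : ℝ≥0∞) ^ (2 : ℝ) ∂ℙ) ^ ((1 : ℝ) / 2) ≤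
      ENNReal.ofReal (L₄ * ‖x - y‖ * (1 + ‖x‖ ^ κ + ‖y‖ ^ κ) * ρD Δ ((k : ℝ) * Δ.2))

/-- Assumption 3: uniform-in-time strong convergence of order `α` of the discretization
(started at the discretized initial datum `xh h` of `x`). -/
structure Assumption3 [NormedAddCommGroup E] [MeasurableSpace E]
    {mΩ : MeasurableSpace Ω} (ℙ : Measure Ω)
    (X : E → ℝ → Ω → E) (Y : ℝ × ℝ → E → ℕ → Ω → E) (Eh : ℝ → Set E)
    (ht τt rt qt : ℝ) (x : E) (xh : ℝ → E) (α₁ α₂ L₅ : ℝ) : Prop where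
  hα₁ : 0 < α₁
  hα₂ : 0 < α₂
  hL₅ : 0 < L₅
  xh_mem : ∀ h : ℝ, h ∈ Set.Icc (0 : ℝ) ht → xh h ∈ Eh h
  xh_eq : ∀ h : ℝ, x ∈ Eh h → xh h = x
  conv : ∀ Δ, Adm ht τt Δ → ∀ t : ℝ, 0 ≤ t →
    (∫⁻ ω, (‖X x t ω - Y Δ (xh Δ.1) ⌊t / Δ.2⌋₊ ω‖₊ : ℝ≥0∞) ^ (2 : ℝ) ∂ℙ) ^ ((1 : ℝ) / 2) ≤
      ENNReal.ofReal (L₅ * (1 + ‖x‖ ^ (max rt qt)) * (Δ.1 ^ α₁ + Δ.2 ^ α₂))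

/-! ### the discrete martingale and related objects -/

/-- the filtration `{F_{t_k}}_{k∈ℕ}` -/
def natFiltration {mΩ : MeasurableSpace Ω} (ℱ : Filtration ℝ mΩ) (τ : ℝ) (hτ : 0 ≤ τ) :
    Filtration ℕ mΩ where
  seq k := ℱ ((k : ℝ) * τ)
  mono' := fun _ _ hij =>
    ℱ.mono (mul_le_mul_of_nonneg_right (by exact_mod_cast hij) hτ)
  le' k := ℱ.le _

/-- the discrete martingale `M^{x^h,Δ}_k` (here `m` stands for `μ^Δ(f)`) -/
def Mart [MeasurableSpace Ω] (ℙ : Measure Ω) (Y : ℝ × ℝ → E → ℕ → Ω → E)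
    (Δ : ℝ × ℝ) (f : E → ℝ) (m : ℝ) (xh : E) (k : ℕ) (ω : Ω) : ℝ :=
  Δ.2 * ∑ i ∈ Finset.range k, (f (Y Δ xh i ω) - m) +
    Δ.2 * ∑' i : ℕ, (PD ℙ Y Δ i f (Y Δ xh k ω) - m) -
    Δ.2 * ∑' i : ℕ, (PD ℙ Y Δ i f xh - m)

/-- the martingale difference sequence `Z^{x^h,Δ}_k` -/
def Zseq [MeasurableSpace Ω] (ℙ : Measure Ω) (Y : ℝ × ℝ → E → ℕ → Ω → E)
    (Δ : ℝ × ℝ) (f : E → ℝ) (m : ℝ) (xh : E) (k : ℕ) (ω : Ω) : ℝ :=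
  if k = 0 then 0 else Mart ℙ Y Δ f m xh k ω - Mart ℙ Y Δ f m xh (k - 1) ω

/-- the conditional-variance function `H^Δ` -/
def Hfun [MeasurableSpace Ω] (ℙ : Measure Ω) (Y : ℝ × ℝ → E → ℕ → Ω → E)
    (Δ : ℝ × ℝ) (f : E → ℝ) (m : ℝ) (u : E) : ℝ :=
  -(Δ.2 ^ 2) * |f u - m| ^ 2 +
    Δ.2 ^ 2 * ∫ ω, |∑' i : ℕ, (PD ℙ Y Δ i f (Y Δ u 1 ω) - m)| ^ 2 ∂ℙ -
    Δ.2 ^ 2 * |∑' i : ℕ, (PD ℙ Y Δ i f u - m)| ^ 2 +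
    2 * Δ.2 ^ 2 * (f u - m) * ∑' i : ℕ, (PD ℙ Y Δ i f u - m)


/-! ### auxiliary lemmas for the proof of Statement 11 -/

section AuxProof
variable {α : Type*} [MeasurableSpace α] {ν : Measure α}

/-- Lyapunov's inequality for probability measures. -/
lemma lyap [IsProbabilityMeasure ν] {g : α → ℝ≥0∞} (hg : AEMeasurable g ν)
    {c : ℝ} (hc0 : 0 < c) (hc1 : c ≤ 1) :
    ∫⁻ a, g a ^ c ∂ν ≤ (∫⁻ a, g a ∂ν) ^ c := by
  rcases eq_or_lt_of_le hc1 with h1 | h1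
  · subst h1; simp
  · have hpq : Real.HolderConjugate c⁻¹ (1 - c)⁻¹ :=
      Real.HolderConjugate.inv_inv hc0 (by linarith) (by ring)
    have H := ENNReal.lintegral_mul_le_Lp_mul_Lq ν hpq
      (f := fun a => g a ^ c) (g := fun _ => (1 : ℝ≥0∞))
      (hg.pow_const _) aemeasurable_const
    simp only [Pi.mul_apply, mul_one, ENNReal.one_rpow, lintegral_one,
      measure_univ, one_mul] at H
    calc ∫⁻ a, g a ^ c ∂ν ≤ (∫⁻ a, (g a ^ c) ^ c⁻¹ ∂ν) ^ (1 / c⁻¹) := by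
          simpa using H
      _ = (∫⁻ a, g a ∂ν) ^ c := by
          rw [one_div, inv_inv]
          congr 1
          refine lintegral_congr fun a => ?_
          rw [← ENNReal.rpow_mul, mul_inv_cancel₀ hc0.ne', ENNReal.rpow_one]

/-- transfer of moment bounds to lower exponents. -/
lemma momTrans [IsProbabilityMeasure ν] {g : α → ℝ≥0∞}
    (hg : AEMeasurable g ν) {c cr m : ℝ} (hc : 0 < c) (hccr : c ≤ cr) (hm0 : 0 ≤ m)
    (h : ∫⁻ a, g a ^ cr ∂ν ≤ ENNReal.ofReal m) :
    ∫⁻ a, g a ^ c ∂ν ≤ ENNReal.ofReal (m ^ (c / cr)) := by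
  have hcr : 0 < cr := lt_of_lt_of_le hc hccr
  have h1 : ∀ a, g a ^ c = (g a ^ cr) ^ (c / cr) := by
    intro a
    rw [← ENNReal.rpow_mul, mul_div_cancel₀ _ hcr.ne']
  calc ∫⁻ a, g a ^ c ∂ν = ∫⁻ a, (g a ^ cr) ^ (c / cr) ∂ν := lintegral_congr h1
    _ ≤ (∫⁻ a, g a ^ cr ∂ν) ^ (c / cr) :=
        lyap (hg.pow_const _) (div_pos hc hcr) ((div_le_one hcr).2 hccr)
    _ ≤ (ENNReal.ofReal m) ^ (c / cr) :=
        ENNReal.rpow_le_rpow h (le_of_lt (div_pos hc hcr))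
    _ = ENNReal.ofReal (m ^ (c / cr)) := by
        rw [← ENNReal.ofReal_rpow_of_nonneg hm0 (le_of_lt (div_pos hc hcr))]

variable {E : Type*} [NormedAddCommGroup E] [MeasurableSpace E] [BorelSpace E]
    [SecondCountableTopology E]

/-- the fundamental quantitative estimate used for all three error terms. -/
lemma core (ℙ : Measure α) [IsProbabilityMeasure ℙ]
    {p γ : ℝ} (hp0 : 0 ≤ p) (hγ0 : 0 < γ) (hγ1 : γ ≤ 1)
    {U V : α → E} (hU : Measurable U) (hV : Measurable V)
    {g : E → ℝ} (hg : Measurable g) (hgb : Bdd g)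
    {F : ℝ} (hF : 0 ≤ F) (hLip : ∀ u v, |g u - g v| ≤ F * dQ p γ u v)
    {D M : ℝ} (hD0 : 0 ≤ D) (hM0 : 0 ≤ M)
    (hD : (∫⁻ ω, (‖U ω - V ω‖₊ : ℝ≥0∞) ^ (2:ℝ) ∂ℙ) ^ ((1:ℝ)/2) ≤ ENNReal.ofReal D)
    (hM : ∫⁻ ω, (1 + (‖U ω‖₊ : ℝ≥0∞) ^ p + (‖V ω‖₊ : ℝ≥0∞) ^ p) ∂ℙ ≤ ENNReal.ofReal M) :
    |(∫ ω, g (U ω) ∂ℙ) - ∫ ω, g (V ω) ∂ℙ| ≤ F * (min 1 (D ^ γ) * M ^ ((1:ℝ)/2)) := by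
  obtain ⟨C, hC⟩ := hgb
  have hgU : Integrable (fun ω => g (U ω)) ℙ :=
    (integrable_const C).mono' ((hg.comp hU).aestronglyMeasurable)
      (ae_of_all _ fun ω => by simpa [Real.norm_eq_abs] using hC (U ω))
  have hgV : Integrable (fun ω => g (V ω)) ℙ :=
    (integrable_const C).mono' ((hg.comp hV).aestronglyMeasurable)
      (ae_of_all _ fun ω => by simpa [Real.norm_eq_abs] using hC (V ω))
  set a : α → ℝ≥0∞ := fun ω => ENNReal.ofReal (min 1 (‖U ω - V ω‖ ^ γ)) with ha_def
  set b : α → ℝ≥0∞ := fun ω => ENNReal.ofReal ((1 + ‖U ω‖ ^ p + ‖V ω‖ ^ p) ^ ((1:ℝ)/2))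
    with hb_def
  have hZmeas : Measurable fun ω => U ω - V ω := hU.sub hV
  have ha_meas : Measurable a :=
    (measurable_const.min (hZmeas.norm.pow_const _)).ennreal_ofReal
  have hb_meas : Measurable b := by
    apply Measurable.ennreal_ofReal
    exact ((measurable_const.add (hU.norm.pow_const _)).add (hV.norm.pow_const _)).pow_const _
  have habs : |(∫ ω, g (U ω) ∂ℙ) - ∫ ω, g (V ω) ∂ℙ| ≤
      (∫⁻ ω, ENNReal.ofReal |g (U ω) - g (V ω)| ∂ℙ).toReal := by
    rw [← integral_sub hgU hgV]
    have h1 : |∫ ω, (g (U ω) - g (V ω)) ∂ℙ| ≤ ∫ ω, |g (U ω) - g (V ω)| ∂ℙ := by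
      simpa [Real.norm_eq_abs] using
        norm_integral_le_integral_norm (μ := ℙ) (fun ω => g (U ω) - g (V ω))
    have hmeas : AEStronglyMeasurable (fun ω => |g (U ω) - g (V ω)|) ℙ :=
      (show Measurable fun ω => |g (U ω) - g (V ω)| from
        ((hg.comp hU).sub (hg.comp hV)).abs).aestronglyMeasurable
    have heq : ∫ ω, |g (U ω) - g (V ω)| ∂ℙ =
        (∫⁻ ω, ENNReal.ofReal |g (U ω) - g (V ω)| ∂ℙ).toReal :=
      integral_eq_lintegral_of_nonneg_ae (ae_of_all _ fun ω => abs_nonneg _) hmeas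
    exact h1.trans_eq heq
  have hpt : ∀ ω, ENNReal.ofReal |g (U ω) - g (V ω)| ≤ ENNReal.ofReal F * (a ω * b ω) := by
    intro ω
    have hmin0 : 0 ≤ min 1 (‖U ω - V ω‖ ^ γ) :=
      le_min zero_le_one (Real.rpow_nonneg (norm_nonneg _) _)
    rw [ha_def, hb_def, ← ENNReal.ofReal_mul hmin0, ← ENNReal.ofReal_mul hF]
    exact ENNReal.ofReal_le_ofReal (hLip (U ω) (V ω))
  have hpq : Real.HolderConjugate 2 2 := Real.HolderConjugate.two_two
  have hHolder : ∫⁻ ω, a ω * b ω ∂ℙ ≤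
      (∫⁻ ω, a ω ^ (2:ℝ) ∂ℙ) ^ ((1:ℝ)/2) * (∫⁻ ω, b ω ^ (2:ℝ) ∂ℙ) ^ ((1:ℝ)/2) := by
    simpa using ENNReal.lintegral_mul_le_Lp_mul_Lq ℙ hpq ha_meas.aemeasurable
      hb_meas.aemeasurable
  have hD2 : ∫⁻ ω, (‖U ω - V ω‖₊ : ℝ≥0∞) ^ (2:ℝ) ∂ℙ ≤ ENNReal.ofReal (D ^ (2:ℝ)) := by
    have h2 := ENNReal.rpow_le_rpow hD (by norm_num : (0:ℝ) ≤ 2)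
    rwa [← ENNReal.rpow_mul, one_div, inv_mul_cancel₀ (by norm_num : (2:ℝ) ≠ 0),
      ENNReal.rpow_one, ENNReal.ofReal_rpow_of_nonneg hD0 (by norm_num : (0:ℝ) ≤ 2)] at h2
  have ha2 : ∫⁻ ω, a ω ^ (2:ℝ) ∂ℙ ≤ min 1 (ENNReal.ofReal (D ^ (2*γ))) := by
    refine le_min ?_ ?_
    · calc ∫⁻ ω, a ω ^ (2:ℝ) ∂ℙ ≤ ∫⁻ _, 1 ∂ℙ := by
            refine lintegral_mono fun ω => ?_
            refine ENNReal.rpow_le_one ?_ (by norm_num)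
            exact ENNReal.ofReal_le_one.2 (min_le_left _ _)
        _ = 1 := by simp
    · have hpt2 : ∀ ω, a ω ^ (2:ℝ) ≤ ((‖U ω - V ω‖₊ : ℝ≥0∞) ^ (2:ℝ)) ^ γ := by
        intro ω
        have hle : a ω ≤ ((‖U ω - V ω‖₊ : ℝ≥0∞) ^ γ) := by
          rw [ha_def]
          calc ENNReal.ofReal (min 1 (‖U ω - V ω‖ ^ γ)) ≤
              ENNReal.ofReal (‖U ω - V ω‖ ^ γ) :=
                ENNReal.ofReal_le_ofReal (min_le_right _ _)
            _ = (‖U ω - V ω‖₊ : ℝ≥0∞) ^ γ := by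
                rw [← enorm_eq_nnnorm, ← ofReal_norm,
                  ENNReal.ofReal_rpow_of_nonneg (norm_nonneg _) hγ0.le]
        calc a ω ^ (2:ℝ) ≤ ((‖U ω - V ω‖₊ : ℝ≥0∞) ^ γ) ^ (2:ℝ) :=
              ENNReal.rpow_le_rpow hle (by norm_num)
          _ = ((‖U ω - V ω‖₊ : ℝ≥0∞) ^ (2:ℝ)) ^ γ := by
              rw [← ENNReal.rpow_mul, ← ENNReal.rpow_mul, mul_comm]
      calc ∫⁻ ω, a ω ^ (2:ℝ) ∂ℙ ≤ ∫⁻ ω, ((‖U ω - V ω‖₊ : ℝ≥0∞) ^ (2:ℝ)) ^ γ ∂ℙ :=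
            lintegral_mono hpt2
        _ ≤ (∫⁻ ω, (‖U ω - V ω‖₊ : ℝ≥0∞) ^ (2:ℝ) ∂ℙ) ^ γ :=
            lyap ((hZmeas.nnnorm.coe_nnreal_ennreal.pow_const _).aemeasurable) hγ0 hγ1
        _ ≤ (ENNReal.ofReal (D ^ (2:ℝ))) ^ γ := ENNReal.rpow_le_rpow hD2 hγ0.le
        _ = ENNReal.ofReal (D ^ (2*γ)) := by
            rw [ENNReal.ofReal_rpow_of_nonneg (Real.rpow_nonneg hD0 _) hγ0.le,
              ← Real.rpow_mul hD0]
  have ha_half : (∫⁻ ω, a ω ^ (2:ℝ) ∂ℙ) ^ ((1:ℝ)/2) ≤ ENNReal.ofReal (min 1 (D ^ γ)) := by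
    have h1 : (∫⁻ ω, a ω ^ (2:ℝ) ∂ℙ) ^ ((1:ℝ)/2) ≤
        (min 1 (ENNReal.ofReal (D ^ (2*γ)))) ^ ((1:ℝ)/2) :=
      ENNReal.rpow_le_rpow ha2 (by norm_num)
    have h2 : (min 1 (ENNReal.ofReal (D ^ (2*γ)))) ^ ((1:ℝ)/2) ≤
        min 1 (ENNReal.ofReal (D ^ γ)) := by
      refine le_min ?_ ?_
      · exact ENNReal.rpow_le_one (min_le_left _ _) (by norm_num)
      · calc (min 1 (ENNReal.ofReal (D ^ (2*γ)))) ^ ((1:ℝ)/2) ≤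
            (ENNReal.ofReal (D ^ (2*γ))) ^ ((1:ℝ)/2) :=
              ENNReal.rpow_le_rpow (min_le_right _ _) (by norm_num)
          _ = ENNReal.ofReal (D ^ γ) := by
              rw [ENNReal.ofReal_rpow_of_nonneg (Real.rpow_nonneg hD0 _) (by norm_num),
                ← Real.rpow_mul hD0, show 2 * γ * (1/2) = γ by ring]
    refine (h1.trans h2).trans_eq ?_
    have hofmin : ENNReal.ofReal (min 1 (D ^ γ)) =
        min (ENNReal.ofReal 1) (ENNReal.ofReal (D ^ γ)) := by
      rcases le_total (1:ℝ) (D ^ γ) with h | h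
      · rw [min_eq_left h, min_eq_left (ENNReal.ofReal_le_ofReal h)]
      · rw [min_eq_right h, min_eq_right (ENNReal.ofReal_le_ofReal h)]
    rw [hofmin, ENNReal.ofReal_one]
  have hb2 : ∫⁻ ω, b ω ^ (2:ℝ) ∂ℙ ≤ ENNReal.ofReal M := by
    have hpt2 : ∀ ω, b ω ^ (2:ℝ) = 1 + (‖U ω‖₊ : ℝ≥0∞) ^ p + (‖V ω‖₊ : ℝ≥0∞) ^ p := by
      intro ω
      have hw0 : (0:ℝ) ≤ 1 + ‖U ω‖ ^ p + ‖V ω‖ ^ p := by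
        have h1 := Real.rpow_nonneg (norm_nonneg (U ω)) p
        have h2 := Real.rpow_nonneg (norm_nonneg (V ω)) p
        linarith
      rw [hb_def]
      rw [ENNReal.ofReal_rpow_of_nonneg (Real.rpow_nonneg hw0 _) (by norm_num : (0:ℝ) ≤ 2),
        ← Real.rpow_mul hw0]
      norm_num
      rw [ENNReal.ofReal_add (by linarith [Real.rpow_nonneg (norm_nonneg (U ω)) p] :
          (0:ℝ) ≤ 1 + ‖U ω‖ ^ p) (Real.rpow_nonneg (norm_nonneg (V ω)) p),
        ENNReal.ofReal_add zero_le_one (Real.rpow_nonneg (norm_nonneg (U ω)) p),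
        ENNReal.ofReal_one,
        ← ENNReal.ofReal_rpow_of_nonneg (norm_nonneg (U ω)) hp0,
        ← ENNReal.ofReal_rpow_of_nonneg (norm_nonneg (V ω)) hp0,
        ofReal_norm, enorm_eq_nnnorm, ofReal_norm, enorm_eq_nnnorm]
    calc ∫⁻ ω, b ω ^ (2:ℝ) ∂ℙ
        = ∫⁻ ω, (1 + (‖U ω‖₊ : ℝ≥0∞) ^ p + (‖V ω‖₊ : ℝ≥0∞) ^ p) ∂ℙ := lintegral_congr hpt2
      _ ≤ ENNReal.ofReal M := hM
  have hb_half : (∫⁻ ω, b ω ^ (2:ℝ) ∂ℙ) ^ ((1:ℝ)/2) ≤ ENNReal.ofReal (M ^ ((1:ℝ)/2)) := by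
    calc (∫⁻ ω, b ω ^ (2:ℝ) ∂ℙ) ^ ((1:ℝ)/2) ≤ (ENNReal.ofReal M) ^ ((1:ℝ)/2) :=
          ENNReal.rpow_le_rpow hb2 (by norm_num)
      _ = ENNReal.ofReal (M ^ ((1:ℝ)/2)) := ENNReal.ofReal_rpow_of_nonneg hM0 (by norm_num)
  have hmin0 : 0 ≤ min 1 (D ^ γ) := le_min zero_le_one (Real.rpow_nonneg hD0 _)
  have hchain : ∫⁻ ω, ENNReal.ofReal |g (U ω) - g (V ω)| ∂ℙ ≤
      ENNReal.ofReal (F * (min 1 (D ^ γ) * M ^ ((1:ℝ)/2))) := by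
    calc ∫⁻ ω, ENNReal.ofReal |g (U ω) - g (V ω)| ∂ℙ
        ≤ ∫⁻ ω, ENNReal.ofReal F * (a ω * b ω) ∂ℙ := lintegral_mono hpt
      _ = ENNReal.ofReal F * ∫⁻ ω, a ω * b ω ∂ℙ :=
          lintegral_const_mul' _ _ ENNReal.ofReal_ne_top
      _ ≤ ENNReal.ofReal F *
          ((∫⁻ ω, a ω ^ (2:ℝ) ∂ℙ) ^ ((1:ℝ)/2) * (∫⁻ ω, b ω ^ (2:ℝ) ∂ℙ) ^ ((1:ℝ)/2)) :=
          mul_le_mul_right hHolder _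
      _ ≤ ENNReal.ofReal F *
          (ENNReal.ofReal (min 1 (D ^ γ)) * ENNReal.ofReal (M ^ ((1:ℝ)/2))) :=
          mul_le_mul_right (mul_le_mul' ha_half hb_half) _
      _ = ENNReal.ofReal (F * (min 1 (D ^ γ) * M ^ ((1:ℝ)/2))) := by
          rw [← ENNReal.ofReal_mul hmin0, ← ENNReal.ofReal_mul hF]
  refine habs.trans (ENNReal.toReal_le_of_le_ofReal ?_ hchain)
  have h1 : 0 ≤ M ^ ((1:ℝ)/2) := Real.rpow_nonneg hM0 _
  have h2 : 0 ≤ min 1 (D ^ γ) * M ^ ((1:ℝ)/2) := mul_nonneg hmin0 h1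
  exact mul_nonneg hF h2

end AuxProof

set_option maxHeartbeats 4000000 in
/-- weak convergence of the numerical invariant measure:
`|μ(f) − μ^Δ(f)| ≤ K‖f‖_{p,γ}|Δ^α|^γ` for every `f ∈ C_{p,γ}` and every
admissible `Δ`, with `K` independent of `Δ` and `f`. -/
theorem statement11
    {E Ω : Type*} [NormedAddCommGroup E] [NormedSpace ℝ E] [CompleteSpace E]
    [SecondCountableTopology E] [MeasurableSpace E] [BorelSpace E]
    {mΩ : MeasurableSpace Ω} (ℙ : Measure Ω) (ℱ : Filtration ℝ mΩ)
    (X : E → ℝ → Ω → E) (r rt γ₁ β L₁ L₂ : ℝ) (ρ : ℝ → ℝ)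
    (Eh : ℝ → Set E) (Y : ℝ × ℝ → E → ℕ → Ω → E)
    (ht τt q qt γ₂ κ L₃ L₄ : ℝ) (ρD : ℝ × ℝ → ℝ → ℝ)
    (x : E) (xh : ℝ → E) (α₁ α₂ L₅ : ℝ)
    (hA1 : Assumption1 ℙ ℱ X r rt γ₁ β L₁ L₂ ρ)
    (hA2 : Assumption2 ℙ ℱ Eh Y ht τt q qt γ₂ κ L₃ L₄ ρD)
    (hA3 : Assumption3 ℙ X Y Eh ht τt rt qt x xh α₁ α₂ L₅)
    (μ : Measure E) (hμ : IsInvMeasure ℙ X μ)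
    (μD : ℝ × ℝ → Measure E)
    (hμD : ∀ Δ, Adm ht τt Δ → IsInvMeasureD ℙ Y (Eh Δ.1) Δ (μD Δ))
    (p γ : ℝ) (hp : p ∈ Set.Icc (1 : ℝ) (min q r)) (hγ : γ ∈ Set.Ioc (0 : ℝ) 1) :
    ∃ K > (0 : ℝ), ∀ Δ, Adm ht τt Δ → ∀ f : E → ℝ, MemC Set.univ p γ f →
      |(∫ u, f u ∂μ) - ∫ u, f u ∂(μD Δ)| ≤
        K * CNorm Set.univ p γ f * (Δ.1 ^ α₁ + Δ.2 ^ α₂) ^ γ := by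
  haveI : IsProbabilityMeasure ℙ := hA1.prob
  haveI : IsProbabilityMeasure μ := hμ.1
  obtain ⟨hp1, hpmin⟩ := hp
  obtain ⟨hγ0, hγ1⟩ := hγ
  have hpq : p ≤ q := hpmin.trans (min_le_left _ _)
  have hpr : p ≤ r := hpmin.trans (min_le_right _ _)
  have hp0 : 0 < p := lt_of_lt_of_le one_pos hp1
  have hr0 : 0 < r := lt_of_lt_of_le two_pos hA1.hr
  have hq0 : 0 < q := lt_of_lt_of_le two_pos hA2.hq
  have hL₁ : 0 < L₁ := hA1.hL₁
  have hL₃ : 0 < L₃ := hA2.hL₃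
  have hL₅ : 0 < L₅ := hA3.hL₅
  have hL₂ : 0 < L₂ := hA1.hL₂
  have hL₄ : 0 < L₄ := hA2.hL₄
  have hqtq0 : (0:ℝ) ≤ qt * q := mul_nonneg (by linarith [hA2.hqt]) hq0.le
  have hrtr0 : (0:ℝ) ≤ rt * r := mul_nonneg (by linarith [hA1.hrt]) hr0.le
  -- measurability of the processes
  have measX : ∀ (y : E) (s : ℝ), Measurable fun ω => X y s ω :=
    fun y s => (hA1.jmeas s).comp measurable_prodMk_left
  have measY : ∀ (Δ : ℝ × ℝ) (z : E) (j : ℕ), Measurable fun ω => Y Δ z j ω :=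
    fun Δ z j => (hA2.jmeas Δ j).comp measurable_prodMk_left
  -- the constants
  set cX : ℝ := L₅ * (1 + ‖x‖ ^ (max rt qt)) with hcX_def
  have hcX0 : 0 < cX := by
    have := Real.rpow_nonneg (norm_nonneg x) (max rt qt)
    have := hA3.hL₅
    positivity
  set R : ℝ := ‖x‖ + 2 * cX with hR_def
  have hR0 : 0 ≤ R := by positivity
  set c₁ : ℝ := (L₁ * (1 + ‖x‖ ^ (rt * r))) ^ (p / r) with hc₁_def
  set c₂ : ℝ := (L₃ * (1 + R ^ (qt * q))) ^ (p / q) with hc₂_def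
  have hc₁0 : 0 ≤ c₁ := Real.rpow_nonneg (by positivity) _
  have hc₂0 : 0 ≤ c₂ := Real.rpow_nonneg (by positivity) _
  set Mbar : ℝ := 1 + c₁ + c₂ with hMbar_def
  have hMbar0 : 0 ≤ Mbar := by positivity
  set K : ℝ := max 1 cX * Mbar ^ ((1:ℝ)/2) with hK_def
  have hK0 : 0 < K := by
    apply _root_.mul_pos (lt_of_lt_of_le one_pos (le_max_left _ _))
    exact Real.rpow_pos_of_pos (by positivity) _
  refine ⟨K, hK0, ?_⟩
  -- the sequence of good times
  have hex : ∀ n : ℕ, ∃ T : ℝ, (n:ℝ) ≤ T ∧ ρ T < 1/((n:ℝ)+1) := by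
    intro n
    by_contra hcon
    push_neg at hcon
    have hεpos : (0:ℝ) < 1/((n:ℝ)+1) := by positivity
    have hint : IntegrableOn (fun s => ρ s ^ γ₁) (Ici (n:ℝ)) volume :=
      hA1.ρ_int.mono_set (Ici_subset_Ici.2 (Nat.cast_nonneg n))
    have hconst : IntegrableOn (fun _ : ℝ => (1/((n:ℝ)+1)) ^ γ₁) (Ici (n:ℝ)) volume := by
      refine Integrable.mono hint aestronglyMeasurable_const ?_
      refine (ae_restrict_iff' measurableSet_Ici).2 (ae_of_all _ fun s hs => ?_)
      have h1 : 1/((n:ℝ)+1) ≤ ρ s := hcon s hs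
      have h2 : (1/((n:ℝ)+1)) ^ γ₁ ≤ ρ s ^ γ₁ :=
        Real.rpow_le_rpow hεpos.le h1 hA1.hγ₁.1.le
      rw [Real.norm_eq_abs, Real.norm_eq_abs, abs_of_nonneg (Real.rpow_nonneg hεpos.le _),
        abs_of_nonneg (Real.rpow_nonneg (hA1.ρ_nonneg s) _)]
      exact h2
    rcases (integrableOn_const_iff enorm_ne_top).1 hconst with h | h
    · exact absurd (enorm_eq_zero.1 h) (ne_of_gt (Real.rpow_pos_of_pos hεpos _))
    · rw [Real.volume_Ici] at h
      exact absurd h (by simp)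
  choose t ht1 ht2 using hex
  have htnn : ∀ n, 0 ≤ t n := fun n => le_trans (Nat.cast_nonneg n) (ht1 n)
  have hρlim : Tendsto (fun n => ρ (t n)) atTop (𝓝 0) := by
    refine squeeze_zero_norm (fun n => ?_) tendsto_one_div_add_atTop_nhds_zero_nat
    rw [Real.norm_eq_abs, abs_of_nonneg (hA1.ρ_nonneg _)]
    exact (ht2 n).le
  intro Δ hΔ f hf
  haveI : IsProbabilityMeasure (μD Δ) := (hμD Δ hΔ).1
  have hτ0 : 0 < Δ.2 := hΔ.2.1
  have hτ1 : Δ.2 ≤ 1 := hΔ.2.2.trans hA2.hτt.2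
  have hh0 : 0 ≤ Δ.1 := hΔ.1.1
  have hh1 : Δ.1 ≤ 1 := hΔ.1.2.trans hA2.hht.2
  -- the time indices
  set k : ℕ → ℕ := fun n => ⌊t n / Δ.2⌋₊ with hk_def
  have hkn : ∀ n, n ≤ k n := by
    intro n
    have h1 : (n:ℝ) ≤ t n / Δ.2 := by
      rw [le_div_iff₀ hτ0]
      calc (n:ℝ) * Δ.2 ≤ (n:ℝ) * 1 := by
            exact mul_le_mul_of_nonneg_left hτ1 (Nat.cast_nonneg n)
        _ = (n:ℝ) := mul_one _
        _ ≤ t n := ht1 n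
    calc n = ⌊(n:ℝ)⌋₊ := (Nat.floor_natCast n).symm
      _ ≤ ⌊t n / Δ.2⌋₊ := Nat.floor_le_floor h1
  have hktend : Tendsto k atTop atTop := tendsto_atTop_mono hkn tendsto_id
  -- decay of the discrete mixing rate along the sequence
  obtain ⟨B, hB⟩ := hA2.ρD_sum
  have hρDk : Tendsto (fun n => ρD Δ ((k n : ℝ) * Δ.2)) atTop (𝓝 0) := by
    have hγ₂0 : 0 < γ₂ := hA2.hγ₂.1
    have h1 : Tendsto (fun j : ℕ => ρD Δ ((j:ℝ) * Δ.2) ^ γ₂) atTop (𝓝 0) :=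
      (hB Δ hΔ).1.tendsto_atTop_zero
    have hc : ContinuousAt (fun z : ℝ => z ^ (1/γ₂)) 0 :=
      Real.continuousAt_rpow_const 0 (1/γ₂) (Or.inr (by positivity))
    have h2 : Tendsto (fun j : ℕ => (ρD Δ ((j:ℝ) * Δ.2) ^ γ₂) ^ (1/γ₂)) atTop
        (𝓝 ((0:ℝ) ^ (1/γ₂))) := (hc.tendsto.comp h1)
    have h3 : Tendsto (fun j : ℕ => ρD Δ ((j:ℝ) * Δ.2)) atTop (𝓝 0) := by
      have heq : ∀ j : ℕ, (ρD Δ ((j:ℝ) * Δ.2) ^ γ₂) ^ (1/γ₂) = ρD Δ ((j:ℝ) * Δ.2) := by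
        intro j
        rw [← Real.rpow_mul (hA2.ρD_nonneg Δ _), mul_one_div, div_self hγ₂0.ne',
          Real.rpow_one]
      rw [Real.zero_rpow (by positivity : (1/γ₂) ≠ 0)] at h2
      exact h2.congr heq
    exact h3.comp hktend
  -- the discretized initial datum
  set xH : E := xh Δ.1 with hxH_def
  have hxHmem : xH ∈ Eh Δ.1 := hA3.xh_mem Δ.1 hΔ.1
  have hΔα0 : 0 ≤ Δ.1 ^ α₁ + Δ.2 ^ α₂ := by
    have := Real.rpow_nonneg hh0 α₁
    have := Real.rpow_nonneg hτ0.le α₂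
    linarith
  have hxHnorm : ‖xH‖ ≤ R := by
    have h0 := hA3.conv Δ hΔ 0 le_rfl
    rw [zero_div, Nat.floor_zero] at h0
    have hXY : ∀ ω : Ω, X x 0 ω - Y Δ (xh Δ.1) 0 ω = x - xH := by
      intro ω; rw [hA1.init x ω, hA2.init Δ hΔ (xh Δ.1) hxHmem ω]
    have hconst : (∫⁻ ω, (‖X x 0 ω - Y Δ (xh Δ.1) 0 ω‖₊ : ℝ≥0∞) ^ (2:ℝ) ∂ℙ)
        = ((‖x - xH‖₊ : ℝ≥0∞)) ^ (2:ℝ) := by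
      rw [lintegral_congr fun ω => by rw [hXY ω]]
      rw [lintegral_const, measure_univ, mul_one]
    rw [hconst, ← ENNReal.rpow_mul, show (2:ℝ) * ((1:ℝ)/2) = 1 by norm_num,
      ENNReal.rpow_one] at h0
    have h1 : ‖x - xH‖ ≤ L₅ * (1 + ‖x‖ ^ (max rt qt)) * (Δ.1 ^ α₁ + Δ.2 ^ α₂) := by
      rw [← enorm_eq_nnnorm, ← ofReal_norm] at h0
      refine (ENNReal.ofReal_le_ofReal_iff ?_).1 h0
      have h2 := Real.rpow_nonneg (norm_nonneg x) (max rt qt)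
      positivity
    have h2 : Δ.1 ^ α₁ + Δ.2 ^ α₂ ≤ 2 := by
      have h3 := Real.rpow_le_one hh0 hh1 hA3.hα₁.le
      have h4 := Real.rpow_le_one hτ0.le hτ1 hA3.hα₂.le
      linarith
    have h5 : ‖x - xH‖ ≤ 2 * cX := by
      calc ‖x - xH‖ ≤ cX * (Δ.1 ^ α₁ + Δ.2 ^ α₂) := by rw [hcX_def]; exact h1
        _ ≤ cX * 2 := mul_le_mul_of_nonneg_left h2 hcX0.le
        _ = 2 * cX := mul_comm _ _
    have h6 : ‖xH‖ - ‖x‖ ≤ ‖x - xH‖ := by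
      calc ‖xH‖ - ‖x‖ ≤ ‖xH - x‖ := norm_sub_norm_le xH x
        _ = ‖x - xH‖ := norm_sub_rev xH x
    rw [hR_def]; linarith
  -- moment bounds
  have hmomX : ∀ (y : E) (s : ℝ), 0 ≤ s →
      ∫⁻ ω, (‖X y s ω‖₊ : ℝ≥0∞) ^ p ∂ℙ ≤
        ENNReal.ofReal ((L₁ * (1 + ‖y‖ ^ (rt * r))) ^ (p / r)) := by
    intro y s hs
    exact momTrans ((measX y s).nnnorm.coe_nnreal_ennreal.aemeasurable) hp0 hpr
      (by positivity) (hA1.moment y s hs)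
  have hmomY : ∀ z ∈ Eh Δ.1, ∀ j : ℕ,
      ∫⁻ ω, (‖Y Δ z j ω‖₊ : ℝ≥0∞) ^ p ∂ℙ ≤
        ENNReal.ofReal ((L₃ * (1 + ‖z‖ ^ (qt * q))) ^ (p / q)) := by
    intro z hz j
    exact momTrans ((measY Δ z j).nnnorm.coe_nnreal_ennreal.aemeasurable) hp0 hpq
      (by positivity) (hA2.moment Δ hΔ z hz j)
  have hpair : ∀ (U V : Ω → E), Measurable U → Measurable V → ∀ (mU mV : ℝ),
      0 ≤ mU → 0 ≤ mV →
      (∫⁻ ω, (‖U ω‖₊ : ℝ≥0∞) ^ p ∂ℙ ≤ ENNReal.ofReal mU) →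
      (∫⁻ ω, (‖V ω‖₊ : ℝ≥0∞) ^ p ∂ℙ ≤ ENNReal.ofReal mV) →
      ∫⁻ ω, (1 + (‖U ω‖₊ : ℝ≥0∞) ^ p + (‖V ω‖₊ : ℝ≥0∞) ^ p) ∂ℙ ≤
        ENNReal.ofReal (1 + mU + mV) := by
    intro U V hU hV mU mV hmU0 hmV0 hmU hmV
    rw [lintegral_add_right _ (hV.nnnorm.coe_nnreal_ennreal.pow_const _),
      lintegral_add_right _ (hU.nnnorm.coe_nnreal_ennreal.pow_const _), lintegral_one,
      measure_univ, ENNReal.ofReal_add (by positivity) hmV0,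
      ENNReal.ofReal_add zero_le_one hmU0, ENNReal.ofReal_one]
    exact add_le_add (add_le_add le_rfl hmU) hmV
  -- properties of `f`
  set F : ℝ := CNorm Set.univ p γ f with hF_def
  obtain ⟨hfc, hbw, hbh⟩ := hf
  have hfcont : Continuous f := continuousOn_univ.1 hfc
  have hfmeas : Measurable f := hfcont.measurable
  have hdQ0 : ∀ u v : E, 0 ≤ dQ p γ u v := fun u v =>
    mul_nonneg (le_min zero_le_one (Real.rpow_nonneg (norm_nonneg _) _))
      (Real.rpow_nonneg (by positivity) _)
  have hW0 : 0 ≤ sSup (wQuot p f '' Set.univ) := by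
    refine le_trans ?_ (le_csSup hbw ⟨0, mem_univ 0, rfl⟩)
    exact div_nonneg (abs_nonneg _) (by positivity)
  have hH0 : 0 ≤ sSup (hQuot p γ f '' (Set.univ ×ˢ Set.univ)) := by
    refine le_trans ?_ (le_csSup hbh ⟨(0, 0), mk_mem_prod (mem_univ _) (mem_univ _), rfl⟩)
    exact div_nonneg (abs_nonneg _) (hdQ0 _ _)
  have hF0 : 0 ≤ F := by rw [hF_def]; exact add_nonneg hW0 hH0
  -- `lemA` : ergodic limit of the continuous semigroup along the good times
  have lemA : ∀ (G : ℝ) (g : E → ℝ), 0 ≤ G → Measurable g → (∃ C, ∀ u, |g u| ≤ C) →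
      (∀ u v, |g u - g v| ≤ G * dQ p γ u v) →
      Tendsto (fun n => Pt ℙ X (t n) g x) atTop (𝓝 (∫ u, g u ∂μ)) := by
    rintro G g hG hgm ⟨C, hC⟩ hLip
    have hPtmeas : ∀ s : ℝ, Measurable fun y => Pt ℙ X s g y := by
      intro s
      have h1 : Measurable fun pr : E × Ω => g (X pr.1 s pr.2) := hgm.comp (hA1.jmeas s)
      exact (h1.stronglyMeasurable.integral_prod_right').measurable
    have hPtbd : ∀ (s : ℝ) (y : E), |Pt ℙ X s g y| ≤ C := by
      intro s y
      have h1 := norm_integral_le_of_norm_le_const (μ := ℙ)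
        (f := fun ω => g (X y s ω)) (C := C)
        (ae_of_all _ fun ω => by simpa [Real.norm_eq_abs] using hC (X y s ω))
      simpa [Pt, Real.norm_eq_abs, measure_univ] using h1
    have hC0 : 0 ≤ C := le_trans (abs_nonneg _) (hC 0)
    have hPtint : ∀ s : ℝ, Integrable (fun y => Pt ℙ X s g y) μ := fun s =>
      (integrable_const C).mono' (hPtmeas s).aestronglyMeasurable
        (ae_of_all _ fun y => by simpa [Real.norm_eq_abs] using hPtbd s y)
    have hinv : ∀ n, ∫ y, Pt ℙ X (t n) g y ∂μ = ∫ y, g y ∂μ := fun n =>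
      hμ.2 (t n) (htnn n) g hgm ⟨C, hC⟩
    have hGn : Tendsto (fun n => ∫ y, (Pt ℙ X (t n) g y - Pt ℙ X (t n) g x) ∂μ)
        atTop (𝓝 (∫ _, (0:ℝ) ∂μ)) := by
      refine tendsto_integral_of_dominated_convergence (fun _ => C + C)
        (fun n => ((hPtmeas (t n)).sub measurable_const).aestronglyMeasurable)
        (integrable_const _) (fun n => ae_of_all _ fun y => ?_) (ae_of_all _ fun y => ?_)
      · rw [Real.norm_eq_abs]
        calc |Pt ℙ X (t n) g y - Pt ℙ X (t n) g x|
            ≤ |Pt ℙ X (t n) g y| + |Pt ℙ X (t n) g x| := abs_sub _ _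
          _ ≤ C + C := add_le_add (hPtbd _ _) (hPtbd _ _)
      · set A : ℝ := L₂ * ‖y - x‖ * (1 + ‖y‖ ^ β + ‖x‖ ^ β) with hA_def
        have hA0 : 0 ≤ A := by
          have h1 := Real.rpow_nonneg (norm_nonneg y) β
          have h2 := Real.rpow_nonneg (norm_nonneg x) β
          positivity
        set My : ℝ := 1 + (L₁ * (1 + ‖y‖ ^ (rt * r))) ^ (p / r) + c₁ with hMy_def
        have hMy0 : 0 ≤ My := by
          have h1 : (0:ℝ) ≤ (L₁ * (1 + ‖y‖ ^ (rt * r))) ^ (p / r) :=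
            Real.rpow_nonneg (by positivity) _
          rw [hMy_def]; linarith
        have hkey : ∀ n, |Pt ℙ X (t n) g y - Pt ℙ X (t n) g x| ≤
            G * (min 1 ((A * ρ (t n)) ^ γ) * My ^ ((1:ℝ)/2)) := by
          intro n
          have hD := hA1.contract y x (t n) (htnn n)
          have hM := hpair _ _ (measX y (t n)) (measX x (t n)) _ _
            (Real.rpow_nonneg (by positivity) _) hc₁0 (hmomX y (t n) (htnn n))
            (hmomX x (t n) (htnn n))
          refine core (E := E) ℙ hp0.le hγ0 hγ1 (measX y (t n)) (measX x (t n)) hgm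
            ⟨C, hC⟩ hG hLip (D := A * ρ (t n)) (M := My)
            (mul_nonneg hA0 (hA1.ρ_nonneg _)) hMy0 ?_ ?_
          · rw [hA_def]; exact hD
          · rw [hMy_def]; exact hM
        refine squeeze_zero_norm
          (a := fun n => G * (min 1 ((A * ρ (t n)) ^ γ) * My ^ ((1:ℝ)/2)))
          (fun n => by rw [Real.norm_eq_abs]; exact hkey n) ?_
        have h1 : Tendsto (fun n => A * ρ (t n)) atTop (𝓝 0) := by
          simpa using hρlim.const_mul A
        have h2 : Tendsto (fun n => (A * ρ (t n)) ^ γ) atTop (𝓝 0) := by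
          have hc : ContinuousAt (fun z : ℝ => z ^ γ) 0 :=
            Real.continuousAt_rpow_const 0 γ (Or.inr hγ0.le)
          have h3 := hc.tendsto.comp h1
          rwa [Real.zero_rpow hγ0.ne'] at h3
        have h3 : Tendsto (fun n => min 1 ((A * ρ (t n)) ^ γ)) atTop (𝓝 (min 1 0)) :=
          tendsto_const_nhds.min h2
        rw [min_eq_right zero_le_one] at h3
        have h4 := (h3.mul_const (My ^ ((1:ℝ)/2))).const_mul G
        simpa using h4
    have heq : ∀ n, ∫ y, (Pt ℙ X (t n) g y - Pt ℙ X (t n) g x) ∂μ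
        = (∫ y, g y ∂μ) - Pt ℙ X (t n) g x := by
      intro n
      rw [integral_sub (hPtint (t n)) (integrable_const _), integral_const, probReal_univ,
        one_smul, hinv n]
    rw [integral_zero] at hGn
    have h6 : Tendsto (fun n => (∫ y, g y ∂μ) - Pt ℙ X (t n) g x) atTop (𝓝 0) :=
      hGn.congr heq
    have h7 := (tendsto_const_nhds (x := (∫ y, g y ∂μ)) (f := atTop)).sub h6
    simpa using h7
  -- `lemB` : ergodic limit of the numerical semigroup along the good times
  have hEhae : ∀ᵐ z ∂(μD Δ), z ∈ Eh Δ.1 := by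
    have h := (hμD Δ hΔ).2.1
    rw [ae_iff]
    exact h
  have lemB : ∀ (G : ℝ) (g : E → ℝ), 0 ≤ G → Measurable g → (∃ C, ∀ u, |g u| ≤ C) →
      (∀ u v, |g u - g v| ≤ G * dQ p γ u v) →
      Tendsto (fun n => PD ℙ Y Δ (k n) g xH) atTop (𝓝 (∫ u, g u ∂(μD Δ))) := by
    rintro G g hG hgm ⟨C, hC⟩ hLip
    have hPDmeas : ∀ j : ℕ, Measurable fun z => PD ℙ Y Δ j g z := by
      intro j
      have h1 : Measurable fun pr : E × Ω => g (Y Δ pr.1 j pr.2) := hgm.comp (hA2.jmeas Δ j)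
      exact (h1.stronglyMeasurable.integral_prod_right').measurable
    have hPDbd : ∀ (j : ℕ) (z : E), |PD ℙ Y Δ j g z| ≤ C := by
      intro j z
      have h1 := norm_integral_le_of_norm_le_const (μ := ℙ)
        (f := fun ω => g (Y Δ z j ω)) (C := C)
        (ae_of_all _ fun ω => by simpa [Real.norm_eq_abs] using hC (Y Δ z j ω))
      simpa [PD, Real.norm_eq_abs, measure_univ] using h1
    have hC0 : 0 ≤ C := le_trans (abs_nonneg _) (hC 0)
    have hPDint : ∀ j : ℕ, Integrable (fun z => PD ℙ Y Δ j g z) (μD Δ) := fun j =>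
      (integrable_const C).mono' (hPDmeas j).aestronglyMeasurable
        (ae_of_all _ fun z => by simpa [Real.norm_eq_abs] using hPDbd j z)
    have hinv : ∀ n, ∫ z, PD ℙ Y Δ (k n) g z ∂(μD Δ) = ∫ z, g z ∂(μD Δ) := fun n =>
      (hμD Δ hΔ).2.2 (k n) g hgm ⟨C, hC⟩
    have hGn : Tendsto (fun n => ∫ z, (PD ℙ Y Δ (k n) g z - PD ℙ Y Δ (k n) g xH) ∂(μD Δ))
        atTop (𝓝 (∫ _, (0:ℝ) ∂(μD Δ))) := by
      refine tendsto_integral_of_dominated_convergence (fun _ => C + C)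
        (fun n => ((hPDmeas (k n)).sub measurable_const).aestronglyMeasurable)
        (integrable_const _) (fun n => ae_of_all _ fun z => ?_) ?_
      · rw [Real.norm_eq_abs]
        calc |PD ℙ Y Δ (k n) g z - PD ℙ Y Δ (k n) g xH|
            ≤ |PD ℙ Y Δ (k n) g z| + |PD ℙ Y Δ (k n) g xH| := abs_sub _ _
          _ ≤ C + C := add_le_add (hPDbd _ _) (hPDbd _ _)
      · filter_upwards [hEhae] with z hz
        set A : ℝ := L₄ * ‖z - xH‖ * (1 + ‖z‖ ^ κ + ‖xH‖ ^ κ) with hA_def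
        have hA0 : 0 ≤ A := by
          have h1 := Real.rpow_nonneg (norm_nonneg z) κ
          have h2 := Real.rpow_nonneg (norm_nonneg xH) κ
          positivity
        set Mz : ℝ := 1 + (L₃ * (1 + ‖z‖ ^ (qt * q))) ^ (p / q) +
          (L₃ * (1 + ‖xH‖ ^ (qt * q))) ^ (p / q) with hMz_def
        have hMz0 : 0 ≤ Mz := by
          have h1 : (0:ℝ) ≤ (L₃ * (1 + ‖z‖ ^ (qt * q))) ^ (p / q) :=
            Real.rpow_nonneg (by positivity) _
          have h2 : (0:ℝ) ≤ (L₃ * (1 + ‖xH‖ ^ (qt * q))) ^ (p / q) :=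
            Real.rpow_nonneg (by positivity) _
          rw [hMz_def]; linarith
        have hkey : ∀ n, |PD ℙ Y Δ (k n) g z - PD ℙ Y Δ (k n) g xH| ≤
            G * (min 1 ((A * ρD Δ ((k n : ℝ) * Δ.2)) ^ γ) * Mz ^ ((1:ℝ)/2)) := by
          intro n
          have hD := hA2.contract Δ hΔ z hz xH hxHmem (k n)
          have hM := hpair _ _ (measY Δ z (k n)) (measY Δ xH (k n)) _ _
            (Real.rpow_nonneg (by positivity) _) (Real.rpow_nonneg (by positivity) _)
            (hmomY z hz (k n)) (hmomY xH hxHmem (k n))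
          refine core (E := E) ℙ hp0.le hγ0 hγ1 (measY Δ z (k n)) (measY Δ xH (k n)) hgm
            ⟨C, hC⟩ hG hLip (D := A * ρD Δ ((k n : ℝ) * Δ.2)) (M := Mz)
            (mul_nonneg hA0 (hA2.ρD_nonneg Δ _)) hMz0 ?_ ?_
          · rw [hA_def]; exact hD
          · rw [hMz_def]; exact hM
        refine squeeze_zero_norm
          (a := fun n => G * (min 1 ((A * ρD Δ ((k n : ℝ) * Δ.2)) ^ γ) * Mz ^ ((1:ℝ)/2)))
          (fun n => by rw [Real.norm_eq_abs]; exact hkey n) ?_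
        have h1 : Tendsto (fun n => A * ρD Δ ((k n : ℝ) * Δ.2)) atTop (𝓝 0) := by
          simpa using hρDk.const_mul A
        have h2 : Tendsto (fun n => (A * ρD Δ ((k n : ℝ) * Δ.2)) ^ γ) atTop (𝓝 0) := by
          have hc : ContinuousAt (fun w : ℝ => w ^ γ) 0 :=
            Real.continuousAt_rpow_const 0 γ (Or.inr hγ0.le)
          have h3 := hc.tendsto.comp h1
          rwa [Real.zero_rpow hγ0.ne'] at h3
        have h3 : Tendsto (fun n => min 1 ((A * ρD Δ ((k n : ℝ) * Δ.2)) ^ γ)) atTop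
            (𝓝 (min 1 0)) := tendsto_const_nhds.min h2
        rw [min_eq_right zero_le_one] at h3
        have h4 := (h3.mul_const (Mz ^ ((1:ℝ)/2))).const_mul G
        simpa using h4
    have heq : ∀ n, ∫ z, (PD ℙ Y Δ (k n) g z - PD ℙ Y Δ (k n) g xH) ∂(μD Δ)
        = (∫ z, g z ∂(μD Δ)) - PD ℙ Y Δ (k n) g xH := by
      intro n
      rw [integral_sub (hPDint (k n)) (integrable_const _), integral_const, probReal_univ,
        one_smul, hinv n]
    rw [integral_zero] at hGn
    have h6 : Tendsto (fun n => (∫ z, g z ∂(μD Δ)) - PD ℙ Y Δ (k n) g xH) atTop (𝓝 0) :=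
      hGn.congr heq
    have h7 := (tendsto_const_nhds (x := (∫ z, g z ∂(μD Δ))) (f := atTop)).sub h6
    simpa using h7
  -- main claim for bounded Lipschitz test functions
  have claim : ∀ (G : ℝ) (g : E → ℝ), 0 ≤ G → Measurable g → (∃ C, ∀ u, |g u| ≤ C) →
      (∀ u v, |g u - g v| ≤ G * dQ p γ u v) →
      |(∫ u, g u ∂μ) - ∫ u, g u ∂(μD Δ)| ≤ K * G * (Δ.1 ^ α₁ + Δ.2 ^ α₂) ^ γ := by
    intro G g hG hgm hgb hLip
    have hT2 : ∀ n, |Pt ℙ X (t n) g x - PD ℙ Y Δ (k n) g xH| ≤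
        G * (min 1 ((cX * (Δ.1 ^ α₁ + Δ.2 ^ α₂)) ^ γ) * Mbar ^ ((1:ℝ)/2)) := by
      intro n
      have hD := hA3.conv Δ hΔ (t n) (htnn n)
      have hmY : ∫⁻ ω, (‖Y Δ xH (k n) ω‖₊ : ℝ≥0∞) ^ p ∂ℙ ≤ ENNReal.ofReal c₂ := by
        refine (hmomY xH hxHmem (k n)).trans (ENNReal.ofReal_le_ofReal ?_)
        rw [hc₂_def]
        refine Real.rpow_le_rpow (by positivity) ?_ (by positivity)
        have h1 : ‖xH‖ ^ (qt * q) ≤ R ^ (qt * q) :=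
          Real.rpow_le_rpow (norm_nonneg _) hxHnorm hqtq0
        exact mul_le_mul_of_nonneg_left (by linarith) hL₃.le
      have hM := hpair _ _ (measX x (t n)) (measY Δ xH (k n)) _ _ hc₁0 hc₂0
        (hmomX x (t n) (htnn n)) hmY
      refine core (E := E) ℙ hp0.le hγ0 hγ1 (measX x (t n)) (measY Δ xH (k n)) hgm
        hgb hG hLip (D := cX * (Δ.1 ^ α₁ + Δ.2 ^ α₂)) (M := Mbar)
        (mul_nonneg hcX0.le hΔα0) hMbar0 ?_ ?_
      · rw [hcX_def]
        exact hD
      · rw [hMbar_def]; exact hM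
    have hT2' : ∀ n, |Pt ℙ X (t n) g x - PD ℙ Y Δ (k n) g xH| ≤
        K * G * (Δ.1 ^ α₁ + Δ.2 ^ α₂) ^ γ := by
      intro n
      refine (hT2 n).trans ?_
      have h1 : min 1 ((cX * (Δ.1 ^ α₁ + Δ.2 ^ α₂)) ^ γ) ≤
          max 1 cX * (Δ.1 ^ α₁ + Δ.2 ^ α₂) ^ γ := by
        calc min 1 ((cX * (Δ.1 ^ α₁ + Δ.2 ^ α₂)) ^ γ)
            ≤ (cX * (Δ.1 ^ α₁ + Δ.2 ^ α₂)) ^ γ := min_le_right _ _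
          _ = cX ^ γ * (Δ.1 ^ α₁ + Δ.2 ^ α₂) ^ γ := Real.mul_rpow hcX0.le hΔα0
          _ ≤ max 1 cX * (Δ.1 ^ α₁ + Δ.2 ^ α₂) ^ γ := by
              refine mul_le_mul_of_nonneg_right ?_ (Real.rpow_nonneg hΔα0 _)
              rcases le_total cX 1 with h | h
              · exact le_trans (Real.rpow_le_one hcX0.le h hγ0.le) (le_max_left _ _)
              · calc cX ^ γ ≤ cX ^ (1:ℝ) := Real.rpow_le_rpow_of_exponent_le h hγ1
                  _ = cX := Real.rpow_one _
                  _ ≤ max 1 cX := le_max_right _ _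
      calc G * (min 1 ((cX * (Δ.1 ^ α₁ + Δ.2 ^ α₂)) ^ γ) * Mbar ^ ((1:ℝ)/2))
          ≤ G * ((max 1 cX * (Δ.1 ^ α₁ + Δ.2 ^ α₂) ^ γ) * Mbar ^ ((1:ℝ)/2)) :=
            mul_le_mul_of_nonneg_left
              (mul_le_mul_of_nonneg_right h1 (Real.rpow_nonneg hMbar0 _)) hG
        _ = K * G * (Δ.1 ^ α₁ + Δ.2 ^ α₂) ^ γ := by rw [hK_def]; ring
    have hABlim := ((lemA G g hG hgm hgb hLip).sub (lemB G g hG hgm hgb hLip)).abs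
    exact le_of_tendsto hABlim (Eventually.of_forall hT2')
  -- Lipschitz and growth properties of `f`
  have hLipf : ∀ u v, |f u - f v| ≤ F * dQ p γ u v := by
    intro u v
    rcases eq_or_ne u v with rfl | huv
    · simp only [sub_self, abs_zero]
      exact mul_nonneg hF0 (hdQ0 u u)
    · have hd : 0 < dQ p γ u v := by
        have h1 : 0 < ‖u - v‖ := by
          rw [norm_pos_iff, sub_ne_zero]; exact huv
        refine mul_pos (lt_min one_pos (Real.rpow_pos_of_pos h1 _)) ?_
        refine Real.rpow_pos_of_pos ?_ _
        have h2 := Real.rpow_nonneg (norm_nonneg u) p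
        have h3 := Real.rpow_nonneg (norm_nonneg v) p
        linarith
      have h2 : hQuot p γ f (u, v) ≤ F :=
        le_trans (le_csSup hbh ⟨(u, v), mk_mem_prod (mem_univ _) (mem_univ _), rfl⟩)
          (by rw [hF_def, CNorm]; exact le_add_of_nonneg_left hW0)
      have h3 : |f u - f v| / dQ p γ u v ≤ F := h2
      calc |f u - f v| = |f u - f v| / dQ p γ u v * dQ p γ u v := by field_simp
        _ ≤ F * dQ p γ u v := mul_le_mul_of_nonneg_right h3 hd.le
  have hGrow : ∀ u, |f u| ≤ F * (1 + ‖u‖ ^ (p/2)) := by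
    intro u
    have hden : (0:ℝ) < 1 + ‖u‖ ^ (p/2) := by positivity
    have h2 : wQuot p f u ≤ F :=
      le_trans (le_csSup hbw ⟨u, mem_univ _, rfl⟩)
        (by rw [hF_def, CNorm]; exact le_add_of_nonneg_right hH0)
    have h3 : |f u| / (1 + ‖u‖ ^ (p/2)) ≤ F := h2
    calc |f u| = |f u| / (1 + ‖u‖ ^ (p/2)) * (1 + ‖u‖ ^ (p/2)) := by field_simp
      _ ≤ F * (1 + ‖u‖ ^ (p/2)) := mul_le_mul_of_nonneg_right h3 hden.le
  -- truncations of |f| used for integrability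
  set gN : ℕ → E → ℝ := fun N u => min (N:ℝ) |f u| with hgN_def
  have hgNmeas : ∀ N : ℕ, Measurable (gN N) := fun N =>
    measurable_const.min hfmeas.abs
  have hgNlip : ∀ (N : ℕ) (u v : E), |gN N u - gN N v| ≤ F * dQ p γ u v := by
    intro N u v
    have h2 := abs_min_sub_min_le_max (N:ℝ) |f u| (N:ℝ) |f v|
    rw [sub_self, abs_zero, max_eq_right (abs_nonneg _)] at h2
    calc |gN N u - gN N v| ≤ |(|f u|) - (|f v|)| := h2
      _ ≤ |f u - f v| := abs_abs_sub_abs_le_abs_sub _ _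
      _ ≤ F * dQ p γ u v := hLipf u v
  have hgN0 : ∀ (N : ℕ) (u : E), 0 ≤ gN N u := fun N u =>
    le_min (Nat.cast_nonneg N) (abs_nonneg _)
  have hgNbd : ∀ (N : ℕ) (u : E), |gN N u| ≤ (N:ℝ) := by
    intro N u
    rw [abs_of_nonneg (hgN0 N u)]
    exact min_le_left _ _
  -- generic integrability criterion
  have hIntgen : ∀ (ν : Measure E), IsProbabilityMeasure ν → ∀ (MM : ℝ),
      (∀ N : ℕ, ∫ u, gN N u ∂ν ≤ MM) → Integrable f ν := by
    intro ν hν MM hbdd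
    haveI := hν
    have hint : ∀ N : ℕ, Integrable (gN N) ν := fun N =>
      (integrable_const (N:ℝ)).mono' (hgNmeas N).aestronglyMeasurable
        (ae_of_all _ fun u => by rw [Real.norm_eq_abs]; exact hgNbd N u)
    refine ⟨hfcont.aestronglyMeasurable, ?_⟩
    have hsup : ∀ u : E, (‖f u‖₊ : ℝ≥0∞) = ⨆ N : ℕ, ENNReal.ofReal (gN N u) := by
      intro u
      rw [← enorm_eq_nnnorm, ← ofReal_norm, Real.norm_eq_abs]
      apply le_antisymm
      · have h1 : |f u| = min ((⌈|f u|⌉₊ : ℝ)) |f u| := (min_eq_right (Nat.le_ceil _)).symm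
        calc ENNReal.ofReal |f u|
            = ENNReal.ofReal (gN ⌈|f u|⌉₊ u) := by rw [hgN_def]; simp only; rw [← h1]
          _ ≤ ⨆ N : ℕ, ENNReal.ofReal (gN N u) :=
            le_iSup (fun N : ℕ => ENNReal.ofReal (gN N u)) ⌈|f u|⌉₊
      · exact iSup_le fun N => ENNReal.ofReal_le_ofReal (min_le_right _ _)
    have hmono : ∀ᵐ u ∂ν, Monotone fun N : ℕ => ENNReal.ofReal (gN N u) := by
      refine ae_of_all _ fun u i j hij => ?_
      refine ENNReal.ofReal_le_ofReal (min_le_min ?_ le_rfl)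
      exact_mod_cast hij
    show (∫⁻ u, (‖f u‖₊ : ℝ≥0∞) ∂ν) < ∞
    have hcalc : (∫⁻ u, (‖f u‖₊ : ℝ≥0∞) ∂ν)
        = ⨆ N : ℕ, ∫⁻ u, ENNReal.ofReal (gN N u) ∂ν := by
      rw [lintegral_congr hsup]
      exact lintegral_iSup' (fun N => ((hgNmeas N).ennreal_ofReal).aemeasurable) hmono
    rw [hcalc]
    refine lt_of_le_of_lt (iSup_le fun N => ?_) (ENNReal.ofReal_lt_top (r := MM))
    rw [← ofReal_integral_eq_lintegral_ofReal (hint N) (ae_of_all _ fun u => hgN0 N u)]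
    exact ENNReal.ofReal_le_ofReal (hbdd N)
  -- uniform bounds on the truncated semigroup averages
  set c₅ : ℝ := (L₁ * (1 + ‖x‖ ^ (rt * r))) ^ (p / 2 / r) with hc₅_def
  have hc₅0 : 0 ≤ c₅ := Real.rpow_nonneg (by positivity) _
  set c₆ : ℝ := (L₃ * (1 + ‖xH‖ ^ (qt * q))) ^ (p / 2 / q) with hc₆_def
  have hc₆0 : 0 ≤ c₆ := Real.rpow_nonneg (by positivity) _
  have hPtgN : ∀ (N : ℕ) (n : ℕ),
      Pt ℙ X (t n) (gN N) x ≤ F * (1 + c₅) := by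
    intro N n
    have hmom : ∫⁻ ω, (‖X x (t n) ω‖₊ : ℝ≥0∞) ^ (p/2) ∂ℙ ≤ ENNReal.ofReal c₅ :=
      momTrans ((measX x (t n)).nnnorm.coe_nnreal_ennreal.aemeasurable) (by positivity)
        (by linarith : p/2 ≤ r) (by positivity) (hA1.moment x (t n) (htnn n))
    have h1 : Pt ℙ X (t n) (gN N) x =
        (∫⁻ ω, ENNReal.ofReal (gN N (X x (t n) ω)) ∂ℙ).toReal :=
      integral_eq_lintegral_of_nonneg_ae (ae_of_all _ fun ω => hgN0 N _)
        ((hgNmeas N).comp (measX x (t n))).aestronglyMeasurable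
    rw [h1]
    refine ENNReal.toReal_le_of_le_ofReal (by positivity) ?_
    calc ∫⁻ ω, ENNReal.ofReal (gN N (X x (t n) ω)) ∂ℙ
        ≤ ∫⁻ ω, ENNReal.ofReal F * (1 + (‖X x (t n) ω‖₊ : ℝ≥0∞) ^ (p/2)) ∂ℙ := by
          refine lintegral_mono fun ω => ?_
          calc ENNReal.ofReal (gN N (X x (t n) ω))
              ≤ ENNReal.ofReal (F * (1 + ‖X x (t n) ω‖ ^ (p/2))) :=
                ENNReal.ofReal_le_ofReal (le_trans (min_le_right _ _) (hGrow _))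
            _ = ENNReal.ofReal F * (1 + (‖X x (t n) ω‖₊ : ℝ≥0∞) ^ (p/2)) := by
                rw [ENNReal.ofReal_mul hF0, ENNReal.ofReal_add zero_le_one
                  (Real.rpow_nonneg (norm_nonneg _) _), ENNReal.ofReal_one,
                  ← ENNReal.ofReal_rpow_of_nonneg (norm_nonneg _)
                    (by positivity : (0:ℝ) ≤ p/2),
                  ofReal_norm, enorm_eq_nnnorm]
      _ = ENNReal.ofReal F * ∫⁻ ω, (1 + (‖X x (t n) ω‖₊ : ℝ≥0∞) ^ (p/2)) ∂ℙ :=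
          lintegral_const_mul' _ _ ENNReal.ofReal_ne_top
      _ ≤ ENNReal.ofReal F * (1 + ENNReal.ofReal c₅) := by
          refine mul_le_mul_right ?_ _
          rw [lintegral_add_right _
            ((measX x (t n)).nnnorm.coe_nnreal_ennreal.pow_const _), lintegral_one,
            measure_univ]
          exact add_le_add le_rfl hmom
      _ = ENNReal.ofReal (F * (1 + c₅)) := by
          rw [ENNReal.ofReal_mul hF0, ENNReal.ofReal_add zero_le_one hc₅0,
            ENNReal.ofReal_one]
  have hPDgN : ∀ (N : ℕ) (n : ℕ),
      PD ℙ Y Δ (k n) (gN N) xH ≤ F * (1 + c₆) := by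
    intro N n
    have hmom : ∫⁻ ω, (‖Y Δ xH (k n) ω‖₊ : ℝ≥0∞) ^ (p/2) ∂ℙ ≤ ENNReal.ofReal c₆ :=
      momTrans ((measY Δ xH (k n)).nnnorm.coe_nnreal_ennreal.aemeasurable) (by positivity)
        (by linarith : p/2 ≤ q) (by positivity) (hA2.moment Δ hΔ xH hxHmem (k n))
    have h1 : PD ℙ Y Δ (k n) (gN N) xH =
        (∫⁻ ω, ENNReal.ofReal (gN N (Y Δ xH (k n) ω)) ∂ℙ).toReal :=
      integral_eq_lintegral_of_nonneg_ae (ae_of_all _ fun ω => hgN0 N _)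
        ((hgNmeas N).comp (measY Δ xH (k n))).aestronglyMeasurable
    rw [h1]
    refine ENNReal.toReal_le_of_le_ofReal (by positivity) ?_
    calc ∫⁻ ω, ENNReal.ofReal (gN N (Y Δ xH (k n) ω)) ∂ℙ
        ≤ ∫⁻ ω, ENNReal.ofReal F * (1 + (‖Y Δ xH (k n) ω‖₊ : ℝ≥0∞) ^ (p/2)) ∂ℙ := by
          refine lintegral_mono fun ω => ?_
          calc ENNReal.ofReal (gN N (Y Δ xH (k n) ω))
              ≤ ENNReal.ofReal (F * (1 + ‖Y Δ xH (k n) ω‖ ^ (p/2))) :=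
                ENNReal.ofReal_le_ofReal (le_trans (min_le_right _ _) (hGrow _))
            _ = ENNReal.ofReal F * (1 + (‖Y Δ xH (k n) ω‖₊ : ℝ≥0∞) ^ (p/2)) := by
                rw [ENNReal.ofReal_mul hF0, ENNReal.ofReal_add zero_le_one
                  (Real.rpow_nonneg (norm_nonneg _) _), ENNReal.ofReal_one,
                  ← ENNReal.ofReal_rpow_of_nonneg (norm_nonneg _)
                    (by positivity : (0:ℝ) ≤ p/2),
                  ofReal_norm, enorm_eq_nnnorm]
      _ = ENNReal.ofReal F * ∫⁻ ω, (1 + (‖Y Δ xH (k n) ω‖₊ : ℝ≥0∞) ^ (p/2)) ∂ℙ :=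
          lintegral_const_mul' _ _ ENNReal.ofReal_ne_top
      _ ≤ ENNReal.ofReal F * (1 + ENNReal.ofReal c₆) := by
          refine mul_le_mul_right ?_ _
          rw [lintegral_add_right _
            ((measY Δ xH (k n)).nnnorm.coe_nnreal_ennreal.pow_const _), lintegral_one,
            measure_univ]
          exact add_le_add le_rfl hmom
      _ = ENNReal.ofReal (F * (1 + c₆)) := by
          rw [ENNReal.ofReal_mul hF0, ENNReal.ofReal_add zero_le_one hc₆0,
            ENNReal.ofReal_one]
  have hIntμ : Integrable f μ :=
    hIntgen μ ‹_› (F * (1 + c₅)) fun N =>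
      le_of_tendsto (lemA F (gN N) hF0 (hgNmeas N)
        ⟨(N:ℝ), hgNbd N⟩ (hgNlip N)) (Eventually.of_forall fun n => hPtgN N n)
  have hIntμD : Integrable f (μD Δ) :=
    hIntgen (μD Δ) ‹_› (F * (1 + c₆)) fun N =>
      le_of_tendsto (lemB F (gN N) hF0 (hgNmeas N)
        ⟨(N:ℝ), hgNbd N⟩ (hgNlip N)) (Eventually.of_forall fun n => hPDgN N n)
  -- truncation of `f` preserving the Lipschitz bound
  set fN : ℕ → E → ℝ := fun N u => max (-(N:ℝ)) (min (N:ℝ) (f u)) with hfN_def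
  have hfNmeas : ∀ N, Measurable (fN N) := fun N =>
    measurable_const.max (measurable_const.min hfmeas)
  have hfNbd : ∀ (N : ℕ) (u : E), |fN N u| ≤ (N:ℝ) := by
    intro N u
    rw [abs_le]
    constructor
    · exact le_max_left _ _
    · exact max_le (neg_le_self (Nat.cast_nonneg N)) (min_le_left _ _)
  have hfNlip : ∀ (N : ℕ) (u v : E), |fN N u - fN N v| ≤ F * dQ p γ u v := by
    intro N u v
    have h2 := abs_min_sub_min_le_max (N:ℝ) (f u) (N:ℝ) (f v)
    rw [sub_self, abs_zero, max_eq_right (abs_nonneg _)] at h2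
    calc |fN N u - fN N v|
        = |max (min (N:ℝ) (f u)) (-(N:ℝ)) - max (min (N:ℝ) (f v)) (-(N:ℝ))| := by
          rw [hfN_def]; simp only [max_comm]
      _ ≤ |min (N:ℝ) (f u) - min (N:ℝ) (f v)| := abs_max_sub_max_le_abs _ _ _
      _ ≤ |f u - f v| := h2
      _ ≤ F * dQ p γ u v := hLipf u v
  have hfNabs : ∀ (N : ℕ) (u : E), |fN N u| ≤ |f u| := by
    intro N u
    rw [abs_le]
    constructor
    · refine le_trans ?_ (le_max_right _ _)
      refine le_min ?_ (neg_abs_le _)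
      exact le_trans (neg_nonpos.2 (abs_nonneg _)) (Nat.cast_nonneg N)
    · refine max_le ?_ (le_trans (min_le_right _ _) (le_abs_self _))
      exact le_trans (neg_nonpos.2 (Nat.cast_nonneg N)) (abs_nonneg _)
  have hfNtend : ∀ u : E, Tendsto (fun N => fN N u) atTop (𝓝 (f u)) := by
    intro u
    refine Tendsto.congr' ?_ (tendsto_const_nhds (x := f u))
    filter_upwards [eventually_ge_atTop ⌈|f u|⌉₊] with N hN
    have h1 : |f u| ≤ (N:ℝ) := le_trans (Nat.le_ceil _) (Nat.cast_le.2 hN)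
    rw [hfN_def]
    simp only
    rw [min_eq_right (le_trans (le_abs_self _) h1),
      max_eq_right (le_trans (neg_le_neg h1) (neg_abs_le _))]
  have hμlim : Tendsto (fun N => ∫ u, fN N u ∂μ) atTop (𝓝 (∫ u, f u ∂μ)) :=
    tendsto_integral_of_dominated_convergence (fun u => |f u|)
      (fun N => (hfNmeas N).aestronglyMeasurable) hIntμ.abs
      (fun N => ae_of_all _ fun u => by rw [Real.norm_eq_abs]; exact hfNabs N u)
      (ae_of_all _ hfNtend)
  have hμDlim : Tendsto (fun N => ∫ u, fN N u ∂(μD Δ)) atTop (𝓝 (∫ u, f u ∂(μD Δ))) :=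
    tendsto_integral_of_dominated_convergence (fun u => |f u|)
      (fun N => (hfNmeas N).aestronglyMeasurable) hIntμD.abs
      (fun N => ae_of_all _ fun u => by rw [Real.norm_eq_abs]; exact hfNabs N u)
      (ae_of_all _ hfNtend)
  have hfinal : ∀ N : ℕ, |(∫ u, fN N u ∂μ) - ∫ u, fN N u ∂(μD Δ)| ≤
      K * F * (Δ.1 ^ α₁ + Δ.2 ^ α₂) ^ γ := fun N =>
    claim F (fN N) hF0 (hfNmeas N) ⟨(N:ℝ), hfNbd N⟩ (hfNlip N)
  exact le_of_tendsto ((hμlim.sub hμDlim).abs) (Eventually.of_forall hfinal)
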